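/- Let G be a finite noncyclic group and N a normal subgroup of G. Then β(G) = β(G/N) if and only if N is cyclically embedded in G, i.e., the subgroup generated by N and x is cyclic for every x in G. -/

import Mathlib

/-- A cover of a group: a finite collection of proper subgroups whose union is the group. -/
def IsCover {G : Type*} [Group G] (S : Finset (Subgroup G)) : Prop :=
  (∀ H ∈ S, H ≠ ⊤) ∧ ∀ g : G, ∃ H ∈ S, g ∈ H

/-- An irredundant cover: a cover with no proper subcollection that is also a cover. -/
def IsIrredundantCover {G : Type*} [Group G] (S : Finset (Subgroup G)) : Prop :=
  IsCover S ∧ ∀ T : Finset (Subgroup G), T ⊂ S → ¬ IsCover T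

/-- β(G): the number of irredundant covers of G. -/
noncomputable def beta (G : Type*) [Group G] : ℕ :=
  Nat.card {S : Finset (Subgroup G) // IsIrredundantCover S}

/-- A maximal cyclic subgroup: cyclic, and not contained in any strictly larger cyclic subgroup. -/
def IsMaximalCyclic {G : Type*} [Group G] (C : Subgroup G) : Prop :=
  IsCyclic ↥C ∧ ∀ D : Subgroup G, IsCyclic ↥D → C ≤ D → D = C

/-- A cyclically embedded subgroup: ⟨N, x⟩ is cyclic for all x. -/
def CyclicallyEmbedded {G : Type*} [Group G] (N : Subgroup G) : Prop :=
  ∀ x : G, IsCyclic ↥(N ⊔ Subgroup.zpowers x)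

section Aux

variable {G : Type*} [Group G]

lemma my_zpowers_cyclic (g : G) : IsCyclic (Subgroup.zpowers g) :=
  ⟨⟨g, Subgroup.mem_zpowers g⟩, fun x => by
    obtain ⟨n, hn⟩ := x.2
    exact ⟨n, Subtype.ext (by simpa using hn)⟩⟩

lemma my_cyclic_of_le {H K : Subgroup G} (hle : H ≤ K) (hK : IsCyclic ↥K) : IsCyclic ↥H := by
  haveI := hK
  exact isCyclic_of_surjective (Subgroup.subgroupOfEquivOfLe hle)
    (Subgroup.subgroupOfEquivOfLe hle).surjective

lemma my_zpowers_generator {C : Subgroup G} (hC : IsCyclic ↥C) :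
    ∃ c : G, Subgroup.zpowers c = C := by
  obtain ⟨c, hc⟩ := hC.exists_generator
  refine ⟨(c : G), le_antisymm (Subgroup.zpowers_le.2 c.2) fun x hx => ?_⟩
  obtain ⟨n, hn⟩ := hc ⟨x, hx⟩
  exact ⟨n, by simpa using congrArg (Subtype.val) hn⟩

lemma my_exists_maximalCyclic [Finite G] (g : G) : ∃ C, IsMaximalCyclic C ∧ g ∈ C := by
  obtain ⟨C, hC, hmax⟩ := Set.Finite.exists_maximalFor id
    {D : Subgroup G | IsCyclic ↥D ∧ Subgroup.zpowers g ≤ D} (Set.toFinite _)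
    ⟨Subgroup.zpowers g, my_zpowers_cyclic g, le_rfl⟩
  refine ⟨C, ⟨hC.1, fun D hD hle => ?_⟩, hC.2 (Subgroup.mem_zpowers g)⟩
  exact le_antisymm (hmax ⟨hD, le_trans hC.2 hle⟩ hle) hle

lemma my_maximalCyclic_ne_top (hG : ¬ IsCyclic G) {C : Subgroup G}
    (hC : IsMaximalCyclic C) : C ≠ ⊤ := by
  rintro rfl
  haveI := hC.1
  exact hG (isCyclic_of_surjective Subgroup.topEquiv Subgroup.topEquiv.surjective)

/-- The set of all maximal cyclic subgroups is an irredundant cover. -/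
lemma my_T_irr [Finite G] (hG : ¬ IsCyclic G) :
    IsIrredundantCover ((Set.toFinite {C : Subgroup G | IsMaximalCyclic C}).toFinset) := by
  set T := (Set.toFinite {C : Subgroup G | IsMaximalCyclic C}).toFinset with hT
  have hmemT : ∀ C : Subgroup G, C ∈ T ↔ IsMaximalCyclic C := fun C =>
    Set.Finite.mem_toFinset _
  constructor
  · constructor
    · exact fun H hH => my_maximalCyclic_ne_top hG ((hmemT H).1 hH)
    · intro g
      obtain ⟨C, hC, hg⟩ := my_exists_maximalCyclic g
      exact ⟨C, (hmemT C).2 hC, hg⟩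
  · intro T' hT' hcov
    obtain ⟨C, hCT, hCT'⟩ := Finset.exists_of_ssubset hT'
    have hC : IsMaximalCyclic C := (hmemT C).1 hCT
    obtain ⟨c, hc⟩ := my_zpowers_generator hC.1
    obtain ⟨D, hD, hcD⟩ := hcov.2 c
    have hDmax : IsMaximalCyclic D := (hmemT D).1 (hT'.1 hD)
    have : D = C := hC.2 D hDmax.1 (hc ▸ Subgroup.zpowers_le.2 hcD)
    exact hCT' (this ▸ hD)

lemma my_exists_private {S : Finset (Subgroup G)} (hS : IsIrredundantCover S)
    {H : Subgroup G} (hH : H ∈ S) :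
    ∃ g, g ∈ H ∧ ∀ K ∈ S, g ∈ K → K = H := by
  by_contra hcon
  push_neg at hcon
  classical
  apply hS.2 (S.erase H) (Finset.erase_ssubset hH)
  refine ⟨fun K hK => hS.1.1 K (Finset.mem_of_mem_erase hK), fun g => ?_⟩
  obtain ⟨K, hK, hg⟩ := hS.1.2 g
  by_cases hKH : K = H
  · subst hKH
    obtain ⟨K', hK', hg', hne⟩ := hcon g hg
    exact ⟨K', Finset.mem_erase.2 ⟨hne, hK'⟩, hg'⟩
  · exact ⟨K, Finset.mem_erase.2 ⟨hKH, hK⟩, hg⟩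

lemma my_le_of_cyclicallyEmbedded {N : Subgroup G} (hN : CyclicallyEmbedded N)
    {S : Finset (Subgroup G)} (hS : IsIrredundantCover S) {H : Subgroup G} (hH : H ∈ S) :
    N ≤ H := by
  obtain ⟨g, hgH, huniq⟩ := my_exists_private hS hH
  obtain ⟨c, hc⟩ := my_zpowers_generator (hN g)
  obtain ⟨K, hK, hcK⟩ := hS.1.2 c
  have hle : N ⊔ Subgroup.zpowers g ≤ K := hc ▸ Subgroup.zpowers_le.2 hcK
  have hgK : g ∈ K := hle (le_sup_right (α := Subgroup G) (Subgroup.mem_zpowers g))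
  have := huniq K hK hgK
  subst this
  exact le_trans le_sup_left hle

end Aux

section Quot

variable {G : Type*} [Group G] (N : Subgroup G) [N.Normal]

open scoped Classical

noncomputable def myPhi (S : Finset (Subgroup (G ⧸ N))) : Finset (Subgroup G) :=
  S.image (Subgroup.comap (QuotientGroup.mk' N))

lemma my_psi_inj : Function.Injective (Subgroup.comap (QuotientGroup.mk' N)) :=
  Subgroup.comap_injective (QuotientGroup.mk'_surjective N)

lemma my_phi_inj : Function.Injective (myPhi N) :=
  Finset.image_injective (my_psi_inj N)

lemma my_mem_phi {S : Finset (Subgroup (G ⧸ N))} {K : Subgroup G} :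
    K ∈ myPhi N S ↔ ∃ H ∈ S, Subgroup.comap (QuotientGroup.mk' N) H = K := by
  simp [myPhi]

lemma my_phi_cover {S : Finset (Subgroup (G ⧸ N))} :
    IsCover (myPhi N S) ↔ IsCover S := by
  constructor
  · rintro ⟨hprop, hcov⟩
    constructor
    · intro H hH h
      exact hprop _ ((my_mem_phi N).2 ⟨H, hH, rfl⟩) (by rw [h, Subgroup.comap_top])
    · intro q
      obtain ⟨g, rfl⟩ := QuotientGroup.mk'_surjective N q
      obtain ⟨K, hK, hg⟩ := hcov g
      obtain ⟨H, hH, rfl⟩ := (my_mem_phi N).1 hK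
      exact ⟨H, hH, hg⟩
  · rintro ⟨hprop, hcov⟩
    constructor
    · intro K hK
      obtain ⟨H, hH, rfl⟩ := (my_mem_phi N).1 hK
      intro h
      exact hprop H hH (my_psi_inj N (by rw [h, Subgroup.comap_top]))
    · intro g
      obtain ⟨H, hH, hg⟩ := hcov (QuotientGroup.mk' N g)
      exact ⟨_, (my_mem_phi N).2 ⟨H, hH, rfl⟩, hg⟩

lemma my_phi_irr {S : Finset (Subgroup (G ⧸ N))} :
    IsIrredundantCover (myPhi N S) ↔ IsIrredundantCover S := by
  constructor
  · rintro ⟨hcov, hirr⟩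
    refine ⟨(my_phi_cover N).1 hcov, fun T hT hTcov => ?_⟩
    refine hirr (myPhi N T) ?_ ((my_phi_cover N).2 hTcov)
    refine ⟨Finset.image_subset_image hT.1, fun h => hT.2 fun H hH => ?_⟩
    have : Subgroup.comap (QuotientGroup.mk' N) H ∈ myPhi N T :=
      h ((my_mem_phi N).2 ⟨H, hH, rfl⟩)
    obtain ⟨H', hH', heq⟩ := (my_mem_phi N).1 this
    rwa [← my_psi_inj N heq]
  · rintro ⟨hcov, hirr⟩
    refine ⟨(my_phi_cover N).2 hcov, fun T hT hTcov => ?_⟩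
    set T'' : Finset (Subgroup (G ⧸ N)) :=
      S.filter (fun H => Subgroup.comap (QuotientGroup.mk' N) H ∈ T) with hT''def
    have himg : myPhi N T'' = T := by
      apply Finset.Subset.antisymm
      · intro K hK
        obtain ⟨H, hH, rfl⟩ := (my_mem_phi N).1 hK
        exact (Finset.mem_filter.1 hH).2
      · intro K hK
        obtain ⟨H, hH, rfl⟩ := (my_mem_phi N).1 (hT.1 hK)
        exact (my_mem_phi N).2 ⟨H, Finset.mem_filter.2 ⟨hH, hK⟩, rfl⟩
    have hT''ss : T'' ⊂ S := by
      refine ⟨Finset.filter_subset _ _, fun h => ?_⟩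
      have : T'' = S := Finset.Subset.antisymm (Finset.filter_subset _ _) h
      exact hT.2 (by rw [← himg, this])
    apply hirr T'' hT''ss
    rw [← my_phi_cover N, himg]
    exact hTcov

lemma my_phi_surj_on {S : Finset (Subgroup G)} (hle : ∀ H ∈ S, N ≤ H) :
    myPhi N (S.image (Subgroup.map (QuotientGroup.mk' N))) = S := by
  rw [myPhi, Finset.image_image]
  have : ∀ H ∈ S, (Subgroup.comap (QuotientGroup.mk' N) ∘
      Subgroup.map (QuotientGroup.mk' N)) H = H := by
    intro H hH
    simp only [Function.comp_apply, Subgroup.comap_map_eq, QuotientGroup.ker_mk']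
    exact sup_eq_left.2 (hle H hH)
  calc S.image _ = S.image id := Finset.image_congr this
    _ = S := Finset.image_id

end Quot

theorem stmt4 {G : Type*} [Group G] [Finite G] (hG : ¬ IsCyclic G)
    (N : Subgroup G) [N.Normal] :
    beta G = beta (G ⧸ N) ↔ CyclicallyEmbedded N := by
  classical
  haveI : Fintype (Subgroup G) := Fintype.ofFinite _
  haveI : Fintype (Subgroup (G ⧸ N)) := Fintype.ofFinite _
  set f : {S : Finset (Subgroup (G ⧸ N)) // IsIrredundantCover S} →
      {S : Finset (Subgroup G) // IsIrredundantCover S} :=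
    fun S => ⟨myPhi N S.1, (my_phi_irr N).2 S.2⟩ with hf
  have hfinj : Function.Injective f := by
    intro a b hab
    exact Subtype.ext (my_phi_inj N (congrArg Subtype.val hab))
  constructor
  · -- β equal ⇒ cyclically embedded
    intro hbeta
    have hfbij : Function.Bijective f :=
      (Nat.bijective_iff_injective_and_card f).2 ⟨hfinj, hbeta.symm⟩
    -- every irredundant cover has all members containing N
    have hall : ∀ S : Finset (Subgroup G), IsIrredundantCover S → ∀ H ∈ S, N ≤ H := by
      intro S hS H hH
      obtain ⟨S₀, hS₀⟩ := hfbij.2 ⟨S, hS⟩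
      have : myPhi N S₀.1 = S := congrArg Subtype.val hS₀
      rw [← this] at hH
      obtain ⟨H₀, _, rfl⟩ := (my_mem_phi N).1 hH
      intro n hn
      show QuotientGroup.mk' N n ∈ H₀
      have : QuotientGroup.mk' N n = 1 := by
        rw [← MonoidHom.mem_ker, QuotientGroup.ker_mk']; exact hn
      rw [this]; exact H₀.one_mem
    -- so every maximal cyclic subgroup contains N
    intro x
    obtain ⟨C, hC, hx⟩ := my_exists_maximalCyclic x
    have hNC : N ≤ C := hall _ (my_T_irr hG) C ((Set.Finite.mem_toFinset _).2 hC)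
    exact my_cyclic_of_le (sup_le hNC (Subgroup.zpowers_le.2 hx)) hC.1
  · -- cyclically embedded ⇒ β equal
    intro hN
    have hfsurj : Function.Surjective f := by
      rintro ⟨S, hS⟩
      have hle : ∀ H ∈ S, N ≤ H := fun H hH => my_le_of_cyclicallyEmbedded hN hS hH
      have himg : myPhi N (S.image (Subgroup.map (QuotientGroup.mk' N))) = S :=
        my_phi_surj_on N hle
      exact ⟨⟨S.image (Subgroup.map (QuotientGroup.mk' N)),
        (my_phi_irr N).1 (by rw [himg]; exact hS)⟩, Subtype.ext himg⟩
    exact (Nat.card_eq_of_bijective f ⟨hfinj, hfsurj⟩).symm
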